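/- Let 1 ≤ j < k ≤ n and let m be a nonzero integer. Suppose a reduced word w has jk-factorisation w = w_0 s_{i_1} w_1 ⋯ s_{i_ℓ} w_ℓ in which no factor w_ν has length 2|m|. Then the jk-factorisation of the reduced word (w)a_{jk}^m has the form w_0' s_{i_1} w_1' ⋯ s_{i_ℓ} w_ℓ' with the same separating letters s_{i_1},…,s_{i_ℓ}, and for every ν with 1 ≤ ν ≤ ℓ−1, if w_ν is critical then w_ν' is critical and |w_ν| + |w_ν'| ≥ 2|m|. -/

import Mathlib

/-- Relators for the braid group `Br_n` on generators `σ_1, …, σ_{n-1}`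
(indexed by natural numbers; out-of-range generators are killed). -/
def braidRels (n : ℕ) : Set (FreeGroup ℕ) :=
  {r | (∃ i, 1 ≤ i ∧ i + 2 ≤ n ∧
        r = FreeGroup.of i * FreeGroup.of (i+1) * FreeGroup.of i *
            (FreeGroup.of (i+1) * FreeGroup.of i * FreeGroup.of (i+1))⁻¹) ∨
       (∃ i j, 1 ≤ i ∧ i + 2 ≤ j ∧ j + 1 ≤ n ∧
        r = FreeGroup.of i * FreeGroup.of j * (FreeGroup.of j * FreeGroup.of i)⁻¹) ∨
       (∃ i, (i = 0 ∨ n ≤ i) ∧ r = FreeGroup.of i)}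

/-- The braid group on `n` strands. -/
abbrev BraidGroup (n : ℕ) := PresentedGroup (braidRels n)

/-- The Artin generator `σ_i` of the braid group (`1 ≤ i ≤ n-1`). -/
def braidGen (n i : ℕ) : BraidGroup n := PresentedGroup.of i

/-- The band generator `a_{ij} = (σ_{j-1} ⋯ σ_{i+1}) σ_i (σ_{j-1} ⋯ σ_{i+1})⁻¹`. -/
def band (n i j : ℕ) : BraidGroup n :=
  (((List.range (j - 1 - i)).map (fun t => braidGen n (j - 1 - t))).prod) * braidGen n i *
  (((List.range (j - 1 - i)).map (fun t => braidGen n (j - 1 - t))).prod)⁻¹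

/-- The band generator with the convention `a_{ji} = a_{ij}`. -/
def bandS (n i j : ℕ) : BraidGroup n := band n (min i j) (max i j)

/-- The subgroup `E_M ≤ Br_n` generated by the powers `a_{ij}^{m_{ij}}`. -/
def bandSubgroup (n : ℕ) (m : ℕ → ℕ → ℕ) : Subgroup (BraidGroup n) :=
  Subgroup.closure {x | ∃ i j, 1 ≤ i ∧ i < j ∧ j ≤ n ∧ x = band n i j ^ m i j}

/-- Relators of the universal Coxeter group `C̃_n = ⟨s_1,…,s_n ∣ s_i² = 1⟩`
(generators indexed by natural numbers; out-of-range generators are killed). -/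
def ucoxRels (n : ℕ) : Set (FreeGroup ℕ) :=
  {r | (∃ i, 1 ≤ i ∧ i ≤ n ∧ r = FreeGroup.of i * FreeGroup.of i) ∨
       (∃ i, (i = 0 ∨ n < i) ∧ r = FreeGroup.of i)}

/-- The universal Coxeter group `C̃_n`, the free product of `n` copies of `ℤ/2ℤ`. -/
abbrev UCox (n : ℕ) := PresentedGroup (ucoxRels n)

/-- The generator `s_i` of `C̃_n`. -/
def cS (n i : ℕ) : UCox n := PresentedGroup.of i

lemma mk_rel_eq_one {α : Type*} {rels : Set (FreeGroup α)} {r : FreeGroup α} (h : r ∈ rels) :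
    (PresentedGroup.mk rels r) = 1 :=
  (QuotientGroup.eq_one_iff r).mpr (Subgroup.subset_normalClosure h)

lemma cS_sq (n i : ℕ) (h1 : 1 ≤ i) (h2 : i ≤ n) : cS n i * cS n i = 1 := by
  have := mk_rel_eq_one (show FreeGroup.of i * FreeGroup.of i ∈ ucoxRels n from
    Or.inl ⟨i, h1, h2, rfl⟩)
  simpa [cS, PresentedGroup.of] using this

lemma cS_junk (n i : ℕ) (h : i = 0 ∨ n < i) : cS n i = 1 :=
  mk_rel_eq_one (Or.inr ⟨i, h, rfl⟩)

lemma cS_cancel (n i : ℕ) (h1 : 1 ≤ i) (h2 : i ≤ n) : ∀ t : UCox n, cS n i * (cS n i * t) = t := by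
  intro t; rw [← mul_assoc, cS_sq n i h1 h2, one_mul]
/-- The effect of the Hurwitz automorphism of `σ_j` on the generators of `C̃_n`:
`s_j ↦ s_j s_{j+1} s_j`, `s_{j+1} ↦ s_j`. -/
def hmap (n j : ℕ) : ℕ → UCox n := fun i =>
  if i = j then cS n j * cS n (j+1) * cS n j else if i = j + 1 then cS n j else cS n i

/-- The effect of the inverse Hurwitz automorphism of `σ_j` on the generators of `C̃_n`. -/
def hmapInv (n j : ℕ) : ℕ → UCox n := fun i =>
  if i = j then cS n (j+1) else if i = j + 1 then cS n (j+1) * cS n j * cS n (j+1) else cS n i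

lemma hmap_self (n j : ℕ) : hmap n j j = cS n j * cS n (j+1) * cS n j := by simp [hmap]
lemma hmap_succ (n j : ℕ) : hmap n j (j+1) = cS n j := by simp [hmap]
lemma hmap_other (n j x : ℕ) (h1 : x ≠ j) (h2 : x ≠ j + 1) : hmap n j x = cS n x := by
  simp [hmap, h1, h2]
lemma hmapInv_self (n j : ℕ) : hmapInv n j j = cS n (j+1) := by simp [hmapInv]
lemma hmapInv_succ (n j : ℕ) : hmapInv n j (j+1) = cS n (j+1) * cS n j * cS n (j+1) := by
  simp [hmapInv]
lemma hmapInv_other (n j x : ℕ) (h1 : x ≠ j) (h2 : x ≠ j + 1) : hmapInv n j x = cS n x := by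
  simp [hmapInv, h1, h2]

lemma hmap_rels (n j : ℕ) (hj1 : 1 ≤ j) (hj2 : j + 1 ≤ n) :
    ∀ r ∈ ucoxRels n, FreeGroup.lift (hmap n j) r = 1 := by
  rintro r (⟨i, hi1, hi2, rfl⟩ | ⟨i, hi, rfl⟩)
  · rw [map_mul, FreeGroup.lift_apply_of]
    by_cases e1 : i = j
    · subst e1
      rw [hmap_self]
      have ha := cS_cancel n i hi1 (by omega)
      have hb := cS_cancel n (i+1) (by omega) hj2
      calc cS n i * cS n (i+1) * cS n i * (cS n i * cS n (i+1) * cS n i)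
          = cS n i * (cS n (i+1) * (cS n i * (cS n i * (cS n (i+1) * cS n i)))) := by
            simp [mul_assoc]
        _ = 1 := by rw [ha, hb, cS_sq n i hi1 (by omega)]
    · by_cases e2 : i = j + 1
      · subst e2; rw [hmap_succ]; exact cS_sq n j hj1 (by omega)
      · rw [hmap_other n j i e1 e2]; exact cS_sq n i hi1 hi2
  · rw [FreeGroup.lift_apply_of, hmap_other n j i (by omega) (by omega)]
    exact cS_junk n i hi

lemma hmapInv_rels (n j : ℕ) (hj1 : 1 ≤ j) (hj2 : j + 1 ≤ n) :
    ∀ r ∈ ucoxRels n, FreeGroup.lift (hmapInv n j) r = 1 := by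
  rintro r (⟨i, hi1, hi2, rfl⟩ | ⟨i, hi, rfl⟩)
  · rw [map_mul, FreeGroup.lift_apply_of]
    by_cases e1 : i = j
    · subst e1; rw [hmapInv_self]; exact cS_sq n (i+1) (by omega) hj2
    · by_cases e2 : i = j + 1
      · subst e2
        rw [hmapInv_succ]
        have ha := cS_cancel n (j+1) (by omega) hj2
        have hb := cS_cancel n j hj1 (by omega)
        calc cS n (j+1) * cS n j * cS n (j+1) * (cS n (j+1) * cS n j * cS n (j+1))
            = cS n (j+1) * (cS n j * (cS n (j+1) * (cS n (j+1) * (cS n j * cS n (j+1))))) := by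
              simp [mul_assoc]
          _ = 1 := by rw [ha, hb, cS_sq n (j+1) (by omega) hj2]
      · rw [hmapInv_other n j i e1 e2]; exact cS_sq n i hi1 hi2
  · rw [FreeGroup.lift_apply_of, hmapInv_other n j i (by omega) (by omega)]
    exact cS_junk n i hi

/-- The Hurwitz endomorphism of `C̃_n` induced by `σ_j`. -/
def hEnd (n j : ℕ) (hj1 : 1 ≤ j) (hj2 : j + 1 ≤ n) : UCox n →* UCox n :=
  PresentedGroup.toGroup (hmap_rels n j hj1 hj2)

/-- The inverse Hurwitz endomorphism of `C̃_n` induced by `σ_j`. -/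
def hEndInv (n j : ℕ) (hj1 : 1 ≤ j) (hj2 : j + 1 ≤ n) : UCox n →* UCox n :=
  PresentedGroup.toGroup (hmapInv_rels n j hj1 hj2)

lemma hEnd_cS (n j : ℕ) (hj1 : 1 ≤ j) (hj2 : j + 1 ≤ n) (x : ℕ) :
    hEnd n j hj1 hj2 (cS n x) = hmap n j x :=
  PresentedGroup.toGroup.of _

lemma hEndInv_cS (n j : ℕ) (hj1 : 1 ≤ j) (hj2 : j + 1 ≤ n) (x : ℕ) :
    hEndInv n j hj1 hj2 (cS n x) = hmapInv n j x :=
  PresentedGroup.toGroup.of _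
lemma hEnd_comp_hEndInv (n j : ℕ) (hj1 : 1 ≤ j) (hj2 : j + 1 ≤ n) :
    (hEnd n j hj1 hj2).comp (hEndInv n j hj1 hj2) = MonoidHom.id (UCox n) := by
  apply PresentedGroup.ext
  intro x
  simp only [MonoidHom.comp_apply, MonoidHom.id_apply]
  show hEnd n j hj1 hj2 (hEndInv n j hj1 hj2 (cS n x)) = cS n x
  rw [hEndInv_cS]
  by_cases e1 : x = j
  · rw [e1]
    rw [hmapInv_self, hEnd_cS, hmap_succ]
  · by_cases e2 : x = j + 1
    · rw [e2]
      rw [hmapInv_succ, map_mul, map_mul, hEnd_cS, hEnd_cS, hmap_self, hmap_succ]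
      have Kj := cS_cancel n j hj1 (by omega)
      have Qj := cS_sq n j hj1 (by omega)
      simp only [mul_assoc]
      rw [Kj, Qj, mul_one]
    · rw [hmapInv_other n j x e1 e2, hEnd_cS, hmap_other n j x e1 e2]

lemma hEndInv_comp_hEnd (n j : ℕ) (hj1 : 1 ≤ j) (hj2 : j + 1 ≤ n) :
    (hEndInv n j hj1 hj2).comp (hEnd n j hj1 hj2) = MonoidHom.id (UCox n) := by
  apply PresentedGroup.ext
  intro x
  simp only [MonoidHom.comp_apply, MonoidHom.id_apply]
  show hEndInv n j hj1 hj2 (hEnd n j hj1 hj2 (cS n x)) = cS n x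
  rw [hEnd_cS]
  by_cases e1 : x = j
  · rw [e1]
    rw [hmap_self, map_mul, map_mul, hEndInv_cS, hEndInv_cS, hmapInv_self, hmapInv_succ]
    have K := cS_cancel n (j+1) (by omega) hj2
    have Q := cS_sq n (j+1) (by omega) hj2
    simp only [mul_assoc]
    rw [K, Q, mul_one]
  · by_cases e2 : x = j + 1
    · rw [e2]
      rw [hmap_succ, hEndInv_cS, hmapInv_self]
    · rw [hmap_other n j x e1 e2, hEndInv_cS, hmapInv_other n j x e1 e2]

/-- The Hurwitz automorphism of `C̃_n` induced by `σ_j`: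
`s_j ↦ s_j s_{j+1} s_j`, `s_{j+1} ↦ s_j`. -/
def hAut (n j : ℕ) (hj1 : 1 ≤ j) (hj2 : j + 1 ≤ n) : MulAut (UCox n) :=
  MonoidHom.toMulEquiv (hEnd n j hj1 hj2) (hEndInv n j hj1 hj2)
    (hEndInv_comp_hEnd n j hj1 hj2) (hEnd_comp_hEndInv n j hj1 hj2)

lemma hAut_apply (n j : ℕ) (hj1 : 1 ≤ j) (hj2 : j + 1 ≤ n) (x : UCox n) :
    hAut n j hj1 hj2 x = hEnd n j hj1 hj2 x := rfl
lemma braid_hcomp (n i : ℕ) (ha1 : 1 ≤ i) (ha2 : i + 1 ≤ n) (hb1 : 1 ≤ i + 1)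
    (hb2 : i + 1 + 1 ≤ n) :
    (hEnd n i ha1 ha2).comp ((hEnd n (i+1) hb1 hb2).comp (hEnd n i ha1 ha2)) =
      (hEnd n (i+1) hb1 hb2).comp ((hEnd n i ha1 ha2).comp (hEnd n (i+1) hb1 hb2)) := by
  have Ki : ∀ t : UCox n, cS n i * (cS n i * t) = t := cS_cancel n i ha1 (by omega)
  have HA2 : hmap n i (i+1+1) = cS n (i+1+1) := hmap_other n i (i+1+1) (by omega) (by omega)
  have HB0 : hmap n (i+1) i = cS n i := hmap_other n (i+1) i (by omega) (by omega)
  apply PresentedGroup.ext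
  intro x
  simp only [MonoidHom.comp_apply]
  show hEnd n i ha1 ha2 (hEnd n (i+1) hb1 hb2 (hEnd n i ha1 ha2 (cS n x))) =
    hEnd n (i+1) hb1 hb2 (hEnd n i ha1 ha2 (hEnd n (i+1) hb1 hb2 (cS n x)))
  by_cases e1 : x = i
  · rw [e1]
    simp only [map_mul, hEnd_cS, hmap_self, hmap_succ, HA2, HB0, mul_assoc, Ki]
  · by_cases e2 : x = i + 1
    · rw [e2]
      simp only [map_mul, hEnd_cS, hmap_self, hmap_succ, HA2, HB0, mul_assoc, Ki]
    · by_cases e3 : x = i + 1 + 1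
      · rw [e3]
        simp only [map_mul, hEnd_cS, hmap_self, hmap_succ, HA2, HB0, mul_assoc, Ki]
      · have HAx : hmap n i x = cS n x := hmap_other n i x e1 e2
        have HBx : hmap n (i+1) x = cS n x := hmap_other n (i+1) x e2 e3
        simp only [hEnd_cS, HAx, HBx]
lemma comm_hcomp (n i j : ℕ) (hi1 : 1 ≤ i) (hij : i + 2 ≤ j) (hjn : j + 1 ≤ n)
    (hi2 : i + 1 ≤ n) (hj1 : 1 ≤ j) :
    (hEnd n i hi1 hi2).comp (hEnd n j hj1 hjn) =
      (hEnd n j hj1 hjn).comp (hEnd n i hi1 hi2) := by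
  have Hij : hmap n i j = cS n j := hmap_other n i j (by omega) (by omega)
  have Hij' : hmap n i (j+1) = cS n (j+1) := hmap_other n i (j+1) (by omega) (by omega)
  have Hji : hmap n j i = cS n i := hmap_other n j i (by omega) (by omega)
  have Hji' : hmap n j (i+1) = cS n (i+1) := hmap_other n j (i+1) (by omega) (by omega)
  apply PresentedGroup.ext
  intro x
  simp only [MonoidHom.comp_apply]
  show hEnd n i hi1 hi2 (hEnd n j hj1 hjn (cS n x)) =
    hEnd n j hj1 hjn (hEnd n i hi1 hi2 (cS n x))
  by_cases e1 : x = i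
  · rw [e1]
    simp only [map_mul, hEnd_cS, hmap_self, hmap_succ, Hij, Hij', Hji, Hji']
  · by_cases e2 : x = i + 1
    · rw [e2]
      simp only [map_mul, hEnd_cS, hmap_self, hmap_succ, Hij, Hij', Hji, Hji']
    · by_cases e3 : x = j
      · rw [e3]
        simp only [map_mul, hEnd_cS, hmap_self, hmap_succ, Hij, Hij', Hji, Hji']
      · by_cases e4 : x = j + 1
        · rw [e4]
          simp only [map_mul, hEnd_cS, hmap_self, hmap_succ, Hij, Hij', Hji, Hji']
        · have HAx : hmap n i x = cS n x := hmap_other n i x e1 e2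
          have HBx : hmap n j x = cS n x := hmap_other n j x e3 e4
          simp only [hEnd_cS, HAx, HBx]

/-- The images in `Aut(C̃_n)` of the braid generators under the (right) Hurwitz action. -/
noncomputable def bmap (n : ℕ) : ℕ → MulAut (UCox n) := fun j =>
  if h : 1 ≤ j ∧ j + 1 ≤ n then (hAut n j h.1 h.2)⁻¹ else 1

lemma bmap_in (n j : ℕ) (h1 : 1 ≤ j) (h2 : j + 1 ≤ n) :
    bmap n j = (hAut n j h1 h2)⁻¹ := by
  simp [bmap, h1, h2]

lemma bmap_out (n j : ℕ) (h : ¬(1 ≤ j ∧ j + 1 ≤ n)) : bmap n j = 1 := dif_neg h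

lemma hAut_braid (n i : ℕ) (ha1 : 1 ≤ i) (ha2 : i + 1 ≤ n) (hb1 : 1 ≤ i + 1)
    (hb2 : i + 1 + 1 ≤ n) :
    hAut n i ha1 ha2 * hAut n (i+1) hb1 hb2 * hAut n i ha1 ha2 =
      hAut n (i+1) hb1 hb2 * hAut n i ha1 ha2 * hAut n (i+1) hb1 hb2 := by
  have h := braid_hcomp n i ha1 ha2 hb1 hb2
  apply MulEquiv.ext
  intro x
  have := DFunLike.congr_fun h x
  simp only [MonoidHom.comp_apply] at this
  simpa only [MulAut.mul_apply, hAut_apply] using this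

lemma hAut_comm (n i j : ℕ) (hi1 : 1 ≤ i) (hij : i + 2 ≤ j) (hjn : j + 1 ≤ n)
    (hi2 : i + 1 ≤ n) (hj1 : 1 ≤ j) :
    hAut n i hi1 hi2 * hAut n j hj1 hjn = hAut n j hj1 hjn * hAut n i hi1 hi2 := by
  have h := comm_hcomp n i j hi1 hij hjn hi2 hj1
  apply MulEquiv.ext
  intro x
  have := DFunLike.congr_fun h x
  simp only [MonoidHom.comp_apply] at this
  simpa only [MulAut.mul_apply, hAut_apply] using this

lemma bmap_rels (n : ℕ) : ∀ r ∈ braidRels n, FreeGroup.lift (bmap n) r = 1 := by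
  rintro r (⟨i, hi1, hi2, rfl⟩ | ⟨i, j, hi1, hij, hjn, rfl⟩ | ⟨i, hi, rfl⟩)
  · simp only [map_mul, map_inv, FreeGroup.lift_apply_of]
    rw [bmap_in n i hi1 (by omega), bmap_in n (i+1) (by omega) (by omega)]
    set A := hAut n i hi1 (by omega : i + 1 ≤ n)
    set B := hAut n (i+1) (by omega : 1 ≤ i + 1) (by omega : i + 1 + 1 ≤ n)
    have k : A * B * A = B * A * B := hAut_braid n i hi1 (by omega) (by omega) (by omega)
    calc A⁻¹ * B⁻¹ * A⁻¹ * (B⁻¹ * A⁻¹ * B⁻¹)⁻¹ = (A * B * A)⁻¹ * (B * A * B) := by group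
      _ = (B * A * B)⁻¹ * (B * A * B) := by rw [k]
      _ = 1 := by group
  · simp only [map_mul, map_inv, FreeGroup.lift_apply_of]
    rw [bmap_in n i hi1 (by omega), bmap_in n j (by omega) hjn]
    set A := hAut n i hi1 (by omega : i + 1 ≤ n)
    set B := hAut n j (by omega : 1 ≤ j) hjn
    have k : A * B = B * A := hAut_comm n i j hi1 hij hjn (by omega) (by omega)
    calc A⁻¹ * B⁻¹ * (B⁻¹ * A⁻¹)⁻¹ = (B * A)⁻¹ * (A * B) := by group
      _ = (A * B)⁻¹ * (A * B) := by rw [← k]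
      _ = 1 := by group
  · rw [FreeGroup.lift_apply_of, bmap_out n i (by omega)]

/-- The Hurwitz action of the braid group `Br_n` on the universal Coxeter group `C̃_n`,
as a homomorphism to the automorphism group (the braid generator `σ_j` is sent to the
inverse of the Hurwitz automorphism, so that `ract` below is a right action). -/
noncomputable def hurwitzHom (n : ℕ) : BraidGroup n →* MulAut (UCox n) :=
  PresentedGroup.toGroup (bmap_rels n)

/-- The right Hurwitz action `(w)β` of `β ∈ Br_n` on `w ∈ C̃_n`: for the generator
`σ_j` one has `(s_j)σ_j = s_j s_{j+1} s_j`, `(s_{j+1})σ_j = s_j`, and all the other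
generators are fixed. -/
noncomputable def ract (n : ℕ) (w : UCox n) (β : BraidGroup n) : UCox n :=
  hurwitzHom n β⁻¹ w
/-- The element of `C̃_n` represented by a word in the letters `s_1, …, s_n`. -/
def wordProd (n : ℕ) (w : List ℕ) : UCox n := (w.map (cS n)).prod

/-- `w` is a reduced word: all letters lie in `{s_1,…,s_n}` and no two consecutive
letters are equal. -/
def IsRedWord (n : ℕ) (w : List ℕ) : Prop :=
  (∀ a ∈ w, 1 ≤ a ∧ a ≤ n) ∧ w.Chain' (· ≠ ·)

/-- Reassemble a word from factorisation data: `glue w₀ [(i₁,w₁),…,(i_ℓ,w_ℓ)]`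
is the word `w₀ s_{i₁} w₁ ⋯ s_{i_ℓ} w_ℓ`. -/
def glue : List ℕ → List (ℕ × List ℕ) → List ℕ
  | w0, [] => w0
  | w0, (s, w) :: rest => w0 ++ s :: glue w rest

/-- `(w₀, [(i₁,w₁),…,(i_ℓ,w_ℓ)])` is the `jk`-factorisation of `w`:
`w = w₀ s_{i₁} w₁ ⋯ s_{i_ℓ} w_ℓ`, every `w_ν` is a word in the letters `s_j, s_k`
and every separating letter satisfies `i_ν ∉ {j,k}`. -/
def IsJKFact (j k : ℕ) (w w0 : List ℕ) (tail : List (ℕ × List ℕ)) : Prop :=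
  w = glue w0 tail ∧ (∀ a ∈ w0, a = j ∨ a = k) ∧
    ∀ p ∈ tail, (p.1 ≠ j ∧ p.1 ≠ k) ∧ ∀ a ∈ p.2, a = j ∨ a = k

/-- The pairs `{a,b}` and `{j,k}` are crossing: the four numbers are pairwise distinct
and exactly one of `a`, `b` lies strictly between `j` and `k`. -/
def CrossingPairs (j k a b : ℕ) : Prop :=
  a ≠ j ∧ a ≠ k ∧ b ≠ j ∧ b ≠ k ∧ a ≠ b ∧ ((j < a ∧ a < k) ↔ ¬(j < b ∧ b < k))

/-- The factor `wν` of a `jk`-factorisation, with adjacent separating letters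
`a` (on the left) and `b` (on the right), is critical. -/
def CriticalFactor (j k a : ℕ) (wν : List ℕ) (b : ℕ) : Prop :=
  (Odd wν.length ∧ a = b) ∨ (Even wν.length ∧ CrossingPairs j k a b)

/-! ### Part A: uniqueness of reduced words -/

lemma isRedWord_nil (n : ℕ) : IsRedWord n [] := ⟨by simp, List.isChain_nil⟩

lemma wordProd_nil (n : ℕ) : wordProd n [] = 1 := rfl

lemma wordProd_cons (n a : ℕ) (l : List ℕ) :
    wordProd n (a :: l) = cS n a * wordProd n l := by
  simp [wordProd]

lemma wordProd_append (n : ℕ) (l1 l2 : List ℕ) :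
    wordProd n (l1 ++ l2) = wordProd n l1 * wordProd n l2 := by
  simp [wordProd]

def preL (i : ℕ) : List ℕ → List ℕ
  | [] => [i]
  | a :: t => if a = i then t else i :: a :: t

lemma isRedWord_preL {n i : ℕ} (h1 : 1 ≤ i) (h2 : i ≤ n) {l : List ℕ}
    (hl : IsRedWord n l) : IsRedWord n (preL i l) := by
  obtain ⟨hmem, hch⟩ := hl
  cases l with
  | nil => exact ⟨by simpa [preL] using ⟨h1, h2⟩, by simp [preL, List.Chain']⟩
  | cons a t =>
    by_cases hai : a = i
    · simp only [preL, if_pos hai]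
      exact ⟨fun x hx => hmem x (List.mem_cons_of_mem a hx), hch.tail⟩
    · simp only [preL, if_neg hai]
      refine ⟨?_, List.isChain_cons_cons.2 ⟨fun h => hai h.symm, hch⟩⟩
      intro x hx
      rcases List.mem_cons.1 hx with rfl | hx
      · exact ⟨h1, h2⟩
      · exact hmem x hx

lemma preL_preL {i : ℕ} {l : List ℕ} (hl : l.Chain' (· ≠ ·)) : preL i (preL i l) = l := by
  cases l with
  | nil => simp [preL]
  | cons a t =>
    by_cases hai : a = i
    · subst hai
      simp only [preL, if_pos rfl]
      cases t with
      | nil => simp [preL]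
      | cons b s =>
        have hba : b ≠ a := Ne.symm (List.isChain_cons_cons.1 hl).1
        simp [preL, hba]
    · simp [preL, hai]

def RW (n : ℕ) := {l : List ℕ // IsRedWord n l}

def prePerm (n i : ℕ) (h1 : 1 ≤ i) (h2 : i ≤ n) : Equiv.Perm (RW n) where
  toFun := fun l => ⟨preL i l.1, isRedWord_preL h1 h2 l.2⟩
  invFun := fun l => ⟨preL i l.1, isRedWord_preL h1 h2 l.2⟩
  left_inv := fun l => Subtype.ext (preL_preL l.2.2)
  right_inv := fun l => Subtype.ext (preL_preL l.2.2)

noncomputable def nfMap (n : ℕ) : ℕ → Equiv.Perm (RW n) := fun i =>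
  if h : 1 ≤ i ∧ i ≤ n then prePerm n i h.1 h.2 else 1

lemma nfMap_rels (n : ℕ) : ∀ r ∈ ucoxRels n, FreeGroup.lift (nfMap n) r = 1 := by
  rintro r (⟨i, h1, h2, rfl⟩ | ⟨i, hi, rfl⟩)
  · simp only [map_mul, FreeGroup.lift_apply_of]
    rw [nfMap, dif_pos ⟨h1, h2⟩]
    ext l
    simp only [Equiv.Perm.mul_apply, Equiv.Perm.one_apply]
    exact Subtype.ext (preL_preL l.2.2)
  · rw [FreeGroup.lift_apply_of, nfMap, dif_neg (by omega)]

noncomputable def nfHom (n : ℕ) : UCox n →* Equiv.Perm (RW n) :=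
  PresentedGroup.toGroup (nfMap_rels n)

lemma nfHom_cS (n i : ℕ) : nfHom n (cS n i) = nfMap n i :=
  PresentedGroup.toGroup.of _

lemma nf_spec (n : ℕ) : ∀ w : List ℕ, IsRedWord n w →
    ((nfHom n (wordProd n w)) ⟨[], isRedWord_nil n⟩).1 = w := by
  intro w
  induction w with
  | nil => intro _; simp [wordProd_nil]; rfl
  | cons a t ih =>
    intro hw
    have hredt : IsRedWord n t :=
      ⟨fun x hx => hw.1 x (List.mem_cons_of_mem a hx), hw.2.tail⟩
    have ha := hw.1 a (List.mem_cons_self)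
    rw [wordProd_cons, map_mul]; erw [Equiv.Perm.mul_apply]; rw [nfHom_cS, nfMap, dif_pos ha]
    show preL a (((nfHom n (wordProd n t)) ⟨[], isRedWord_nil n⟩).1) = a :: t
    rw [ih hredt]
    cases t with
    | nil => simp [preL]
    | cons b s =>
      have hba : b ≠ a := Ne.symm (List.isChain_cons_cons.1 hw.2).1
      simp [preL, hba]

lemma redword_unique {n : ℕ} {w1 w2 : List ℕ} (h1 : IsRedWord n w1) (h2 : IsRedWord n w2)
    (h : wordProd n w1 = wordProd n w2) : w1 = w2 := by
  have e1 := nf_spec n w1 h1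
  rw [h, nf_spec n w2 h2] at e1
  exact e1.symm


/-! ### Part B: alternating `jk`-words -/

def altA (j k : ℕ) : ℕ → List ℕ
  | 0 => []
  | r + 1 => j :: altA k j r

lemma altA_length : ∀ (r j k : ℕ), (altA j k r).length = r := by
  intro r
  induction r with
  | zero => intro j k; rfl
  | succ r ih => intro j k; simp [altA, ih]

lemma altA_mem : ∀ (r j k : ℕ) (a : ℕ), a ∈ altA j k r → a = j ∨ a = k := by
  intro r
  induction r with
  | zero => intro j k a ha; simp [altA] at ha
  | succ r ih =>
    intro j k a ha
    rcases List.mem_cons.1 ha with rfl | ha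
    · exact Or.inl rfl
    · exact (ih k j a ha).symm

lemma altA_head (j k r : ℕ) (h : 0 < r) : (altA j k r).head? = some j := by
  cases r with
  | zero => omega
  | succ r => rfl

lemma altA_chain : ∀ (r j k : ℕ), j ≠ k → (altA j k r).Chain' (· ≠ ·) := by
  intro r
  induction r with
  | zero => intro j k _; simp [altA, List.Chain']
  | succ r ih =>
    intro j k hjk
    show List.IsChain (· ≠ ·) (j :: altA k j r)
    rw [List.isChain_cons]
    refine ⟨?_, ih k j (Ne.symm hjk)⟩
    intro b hb
    cases r with
    | zero => simp [altA] at hb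
    | succ r =>
      rw [altA_head k j (r+1) (by omega)] at hb
      simp at hb
      omega

lemma classify : ∀ (u : List ℕ) (j k : ℕ), j ≠ k → (∀ a ∈ u, a = j ∨ a = k) →
    u.Chain' (· ≠ ·) → u = altA j k u.length ∨ u = altA k j u.length := by
  intro u
  induction u with
  | nil => intro j k _ _ _; exact Or.inl rfl
  | cons a t ih =>
    intro j k hjk hmem hch
    have ht : t = altA j k t.length ∨ t = altA k j t.length :=
      ih j k hjk (fun x hx => hmem x (List.mem_cons_of_mem a hx)) hch.tail
    have hhead : ∀ b, t.head? = some b → a ≠ b := by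
      intro b hb
      rcases t with _ | ⟨c, s⟩
      · simp at hb
      · simp at hb
        subst hb
        exact (List.isChain_cons_cons.1 hch).1
    rcases hmem a (List.mem_cons_self) with rfl | rfl
    · left
      show a :: t = altA a k (t.length + 1)
      rw [show altA a k (t.length + 1) = a :: altA k a t.length from rfl]
      congr 1
      rcases ht with ht | ht
      · cases t with
        | nil => rfl
        | cons c s =>
          exfalso
          exact hhead a (by rw [ht]; exact altA_head a k _ (by simp)) rfl
      · exact ht
    · right
      show a :: t = altA a j (t.length + 1)
      rw [show altA a j (t.length + 1) = a :: altA j a t.length from rfl]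
      congr 1
      rcases ht with ht | ht
      · exact ht
      · cases t with
        | nil => rfl
        | cons c s =>
          exfalso
          exact hhead a (by rw [ht]; exact altA_head a j _ (by simp)) rfl

/-! Group identities in the dihedral subgroup generated by `s_j, s_k`. -/

section Dihedral

variable {n j k : ℕ} (hj1 : 1 ≤ j) (hjn : j ≤ n) (hk1 : 1 ≤ k) (hkn : k ≤ n)

def dd (n j k : ℕ) : UCox n := cS n j * cS n k

lemma cS_inv (h1 : 1 ≤ j) (h2 : j ≤ n) : (cS n j)⁻¹ = cS n j :=
  inv_eq_of_mul_eq_one_right (cS_sq n j h1 h2)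

include hj1 hjn hk1 hkn

lemma dd_inv : (dd n j k)⁻¹ = cS n k * cS n j := by
  rw [dd, mul_inv_rev, cS_inv hj1 hjn, cS_inv hk1 hkn]

lemma dd_neg_one : (dd n j k) ^ (-1 : ℤ) = cS n k * cS n j := by
  rw [zpow_neg_one, dd_inv hj1 hjn hk1 hkn]

lemma conj_dd : cS n j * dd n j k * cS n j = (dd n j k)⁻¹ := by
  rw [dd_inv hj1 hjn hk1 hkn, dd, ← mul_assoc, cS_sq n j hj1 hjn, one_mul]

lemma conj_dd_zpow (t : ℤ) : cS n j * (dd n j k) ^ t * cS n j = (dd n j k) ^ (-t) := by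
  have h1 : MulAut.conj (cS n j) ((dd n j k) ^ t) = (MulAut.conj (cS n j) (dd n j k)) ^ t :=
    map_zpow _ _ _
  simp only [MulAut.conj_apply, cS_inv hj1 hjn] at h1
  rw [h1, conj_dd hj1 hjn hk1 hkn, inv_zpow, ← zpow_neg]

lemma swap_jdd (t : ℤ) : cS n j * (dd n j k) ^ t = (dd n j k) ^ (-t) * cS n j := by
  have h := conj_dd_zpow hj1 hjn hk1 hkn (t := t)
  calc cS n j * (dd n j k) ^ t
      = cS n j * (dd n j k) ^ t * cS n j * cS n j := by
        rw [mul_assoc _ (cS n j), cS_sq n j hj1 hjn, mul_one]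
    _ = (dd n j k) ^ (-t) * cS n j := by rw [h]

lemma ddk : (dd n j k) ^ (-1 : ℤ) * cS n j = cS n k := by
  rw [dd_neg_one hj1 hjn hk1 hkn, mul_assoc, cS_sq n j hj1 hjn, mul_one]

lemma ref_mul_ref (a b : ℤ) :
    ((dd n j k) ^ a * cS n j) * ((dd n j k) ^ b * cS n j) = (dd n j k) ^ (a - b) := by
  rw [mul_assoc, ← mul_assoc (cS n j), swap_jdd hj1 hjn hk1 hkn, mul_assoc,
    cS_sq n j hj1 hjn, mul_one, ← zpow_add, sub_eq_add_neg]

lemma wp_altA_ev : ∀ t : ℕ, wordProd n (altA j k (2 * t)) = (dd n j k) ^ (t : ℤ) ∧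
    wordProd n (altA k j (2 * t)) = (dd n j k) ^ (-(t : ℤ)) := by
  intro t
  induction t with
  | zero => constructor <;> simp [altA, wordProd_nil]
  | succ t ih =>
    constructor
    · show wordProd n (j :: k :: altA j k (2 * t)) = _
      rw [wordProd_cons, wordProd_cons, ih.1, ← mul_assoc]
      rw [show (cS n j * cS n k : UCox n) = dd n j k from rfl]
      rw [← zpow_one_add]
      congr 1
      push_cast
      ring
    · show wordProd n (k :: j :: altA k j (2 * t)) = _
      rw [wordProd_cons, wordProd_cons, ih.2, ← mul_assoc]
      rw [show (cS n k * cS n j : UCox n) = (dd n j k) ^ (-1 : ℤ) from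
        (dd_neg_one hj1 hjn hk1 hkn).symm]
      rw [← zpow_add]
      congr 1
      push_cast
      ring

lemma wp_altA_od : ∀ t : ℕ, wordProd n (altA j k (2 * t + 1)) = (dd n j k) ^ (t : ℤ) * cS n j ∧
    wordProd n (altA k j (2 * t + 1)) = (dd n j k) ^ (-(t : ℤ) - 1) * cS n j := by
  intro t
  constructor
  · show wordProd n (j :: altA k j (2 * t)) = _
    rw [wordProd_cons, (wp_altA_ev hj1 hjn hk1 hkn t).2, swap_jdd hj1 hjn hk1 hkn, neg_neg]
  · show wordProd n (k :: altA j k (2 * t)) = _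
    rw [wordProd_cons, (wp_altA_ev hj1 hjn hk1 hkn t).1]
    rw [← ddk hj1 hjn hk1 hkn, mul_assoc, swap_jdd hj1 hjn hk1 hkn, ← mul_assoc, ← zpow_add]
    congr 2
    ring

end Dihedral

/-! Canonical alternating words indexed by `ℤ`. -/

def mkE (j k : ℕ) (t : ℤ) : List ℕ :=
  if 0 ≤ t then altA j k (2 * t.toNat) else altA k j (2 * (-t).toNat)

def mkO (j k : ℕ) (t : ℤ) : List ℕ :=
  if 0 ≤ t then altA j k (2 * t.toNat + 1) else altA k j (2 * (-t).toNat - 1)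

lemma length_mkE (j k : ℕ) (t : ℤ) : (mkE j k t).length = 2 * t.natAbs := by
  rw [mkE]
  split <;> rw [altA_length] <;> omega

lemma length_mkO (j k : ℕ) (t : ℤ) : (mkO j k t).length = (2 * t + 1).natAbs := by
  rw [mkO]
  split <;> rw [altA_length] <;> omega

lemma mem_mkE (j k : ℕ) (t : ℤ) (a : ℕ) (ha : a ∈ mkE j k t) : a = j ∨ a = k := by
  rw [mkE] at ha
  split at ha
  · exact altA_mem _ _ _ _ ha
  · exact (altA_mem _ _ _ _ ha).symm

lemma mem_mkO (j k : ℕ) (t : ℤ) (a : ℕ) (ha : a ∈ mkO j k t) : a = j ∨ a = k := by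
  rw [mkO] at ha
  split at ha
  · exact altA_mem _ _ _ _ ha
  · exact (altA_mem _ _ _ _ ha).symm

lemma chain_mkE (j k : ℕ) (h : j ≠ k) (t : ℤ) : (mkE j k t).Chain' (· ≠ ·) := by
  rw [mkE]; split
  · exact altA_chain _ _ _ h
  · exact altA_chain _ _ _ (Ne.symm h)

lemma chain_mkO (j k : ℕ) (h : j ≠ k) (t : ℤ) : (mkO j k t).Chain' (· ≠ ·) := by
  rw [mkO]; split
  · exact altA_chain _ _ _ h
  · exact altA_chain _ _ _ (Ne.symm h)

section Dihedral2

variable {n j k : ℕ} (hj1 : 1 ≤ j) (hjn : j ≤ n) (hk1 : 1 ≤ k) (hkn : k ≤ n)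

include hj1 hjn hk1 hkn

lemma wp_mkE (t : ℤ) : wordProd n (mkE j k t) = (dd n j k) ^ t := by
  rw [mkE]
  split
  · rw [(wp_altA_ev hj1 hjn hk1 hkn t.toNat).1]
    congr 1
    omega
  · rw [(wp_altA_ev hj1 hjn hk1 hkn (-t).toNat).2]
    congr 1
    omega

lemma wp_mkO (t : ℤ) : wordProd n (mkO j k t) = (dd n j k) ^ t * cS n j := by
  rw [mkO]
  split
  · rw [(wp_altA_od hj1 hjn hk1 hkn t.toNat).1]
    congr 2
    omega
  · have h2 : 2 * (-t).toNat - 1 = 2 * ((-t).toNat - 1) + 1 := by omega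
    rw [h2, (wp_altA_od hj1 hjn hk1 hkn ((-t).toNat - 1)).2]
    congr 2
    omega

end Dihedral2

/-- The integer parameter of an alternating `jk`-word. -/
def parJ (j : ℕ) (u : List ℕ) : ℤ :=
  if u.head? = some j then ((u.length / 2 : ℕ) : ℤ)
  else if Even u.length then -((u.length / 2 : ℕ) : ℤ) else -((u.length / 2 : ℕ) : ℤ) - 1

lemma classify_mk {j k : ℕ} (hjk : j ≠ k) (u : List ℕ) (hmem : ∀ a ∈ u, a = j ∨ a = k)
    (hch : u.Chain' (· ≠ ·)) :
    u = if Even u.length then mkE j k (parJ j u) else mkO j k (parJ j u) := by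
  rcases classify u j k hjk hmem hch with hu | hu
  · rcases Nat.even_or_odd u.length with he | ho
    · rw [if_pos he]
      rcases Nat.eq_zero_or_pos u.length with h0 | hpos
      · rw [List.length_eq_zero_iff] at h0
        subst h0
        rfl
      · have hh : u.head? = some j := by rw [hu]; exact altA_head _ _ _ hpos
        rw [parJ, if_pos hh, mkE, if_pos (by positivity)]
        rw [hu]
        congr 1
        simp only [Int.toNat_natCast, altA_length]
        rcases he with ⟨c, hc⟩
        omega
    · rw [if_neg (Nat.not_even_iff_odd.2 ho)]
      have hpos : 0 < u.length := by rcases ho with ⟨c, hc⟩; omega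
      have hh : u.head? = some j := by rw [hu]; exact altA_head _ _ _ hpos
      rw [parJ, if_pos hh, mkO, if_pos (by positivity)]
      rw [hu]
      congr 1
      simp only [Int.toNat_natCast, altA_length]
      rcases ho with ⟨c, hc⟩
      omega
  · rcases Nat.eq_zero_or_pos u.length with h0 | hpos
    · rw [List.length_eq_zero_iff] at h0
      subst h0
      rfl
    · have hh : u.head? = some k := by rw [hu]; exact altA_head _ _ _ hpos
      have hh' : ¬ u.head? = some j := by rw [hh]; simp; exact Ne.symm hjk
      rcases Nat.even_or_odd u.length with he | ho
      · rw [if_pos he, parJ, if_neg hh', if_pos he, mkE]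
        have hl2 : 0 < u.length / 2 := by
          rcases he with ⟨c, hc⟩; omega
        rw [if_neg (by omega)]
        rw [hu]
        congr 1
        simp only [altA_length]
        rcases he with ⟨c, hc⟩
        omega
      · rw [if_neg (Nat.not_even_iff_odd.2 ho), parJ, if_neg hh',
          if_neg (Nat.not_even_iff_odd.2 ho), mkO]
        rw [if_neg (by omega)]
        rw [hu]
        congr 1
        simp only [altA_length]
        rcases ho with ⟨c, hc⟩
        omega

lemma wp_parJ {n j k : ℕ} (hj1 : 1 ≤ j) (hjn : j ≤ n) (hk1 : 1 ≤ k) (hkn : k ≤ n)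
    (hjk : j ≠ k) (u : List ℕ) (hmem : ∀ a ∈ u, a = j ∨ a = k)
    (hch : u.Chain' (· ≠ ·)) :
    wordProd n u = (dd n j k) ^ (parJ j u) *
      (if Even u.length then 1 else cS n j) := by
  have h := classify_mk hjk u hmem hch
  by_cases he : Even u.length
  · rw [if_pos he] at h
    rw [if_pos he, mul_one]
    conv_lhs => rw [h]
    exact wp_mkE hj1 hjn hk1 hkn _
  · rw [if_neg he] at h
    rw [if_neg he]
    conv_lhs => rw [h]
    exact wp_mkO hj1 hjn hk1 hkn _

lemma len_parJ {j k : ℕ} (hjk : j ≠ k) (u : List ℕ) (hmem : ∀ a ∈ u, a = j ∨ a = k)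
    (hch : u.Chain' (· ≠ ·)) :
    u.length = if Even u.length then 2 * (parJ j u).natAbs else (2 * parJ j u + 1).natAbs := by
  have h := classify_mk hjk u hmem hch
  by_cases he : Even u.length
  · rw [if_pos he] at h
    rw [if_pos he]
    conv_lhs => rw [h]
    exact length_mkE _ _ _
  · rw [if_neg he] at h
    rw [if_neg he]
    conv_lhs => rw [h]
    exact length_mkO _ _ _


/-! ### Part C: the Hurwitz action of the band generator -/

lemma hurwitzHom_gen (n i : ℕ) : hurwitzHom n (braidGen n i) = bmap n i :=
  PresentedGroup.toGroup.of _

lemma hAut_inv_apply (n j : ℕ) (h1 : 1 ≤ j) (h2 : j + 1 ≤ n) (x : UCox n) :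
    (hAut n j h1 h2)⁻¹ x = hEndInv n j h1 h2 x := rfl

lemma band_succ (n j k : ℕ) (h : j < k) :
    band n j (k + 1) = braidGen n k * band n j k * (braidGen n k)⁻¹ := by
  have h1 : k + 1 - 1 - j = (k - 1 - j) + 1 := by omega
  have h2 : ((List.range (k + 1 - 1 - j)).map (fun t => braidGen n (k + 1 - 1 - t))).prod =
      braidGen n k * ((List.range (k - 1 - j)).map (fun t => braidGen n (k - 1 - t))).prod := by
    rw [h1, List.range_succ_eq_map]
    rw [List.map_cons, List.prod_cons, List.map_map]
    rw [show k + 1 - 1 - 0 = k from by omega]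
    congr 1
    congr 1
    apply List.map_congr_left
    intro t _
    simp only [Function.comp_apply, Nat.succ_eq_add_one]
    congr 1
    omega
  rw [band, band, h2]
  group

def bandMap (n j k : ℕ) : ℕ → UCox n := fun x =>
  if x = j then cS n j * cS n k * cS n j
  else if x = k then cS n j
  else if j < x ∧ x < k then cS n j * cS n k * cS n x * (cS n k * cS n j)
  else cS n x

lemma bandMap_j (n j k : ℕ) : bandMap n j k j = cS n j * cS n k * cS n j := if_pos rfl

lemma bandMap_k (n j k : ℕ) (h : j < k) : bandMap n j k k = cS n j := by
  simp [bandMap, show ¬ k = j from by omega]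

lemma bandMap_mid (n j k x : ℕ) (h1 : j < x) (h2 : x < k) :
    bandMap n j k x = cS n j * cS n k * cS n x * (cS n k * cS n j) := by
  rw [bandMap]
  simp only [if_neg (show ¬ x = j from by omega), if_neg (show ¬ x = k from by omega),
    if_pos (⟨h1, h2⟩ : j < x ∧ x < k)]

lemma bandMap_out (n j k x : ℕ) (hx1 : x ≠ j) (hx2 : x ≠ k) (hx3 : ¬(j < x ∧ x < k)) :
    bandMap n j k x = cS n x := by
  rw [bandMap]
  simp only [if_neg hx1, if_neg hx2, if_neg hx3]

lemma hurwitz_band (n j : ℕ) (hj : 1 ≤ j) : ∀ k, j + 1 ≤ k → k ≤ n →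
    ∀ x, hurwitzHom n (band n j k)⁻¹ (cS n x) = bandMap n j k x := by
  intro k hjk
  induction k, hjk using Nat.le_induction with
  | base =>
    intro hkn x
    have hb : band n j (j + 1) = braidGen n j := by
      rw [band]
      simp [show j + 1 - 1 - j = 0 from by omega]
    rw [hb, map_inv, hurwitzHom_gen, bmap_in n j hj hkn, inv_inv]
    rw [hAut_apply, hEnd_cS]
    by_cases e1 : x = j
    · subst e1
      rw [hmap_self, bandMap_j]
    · by_cases e2 : x = j + 1
      · subst e2
        rw [hmap_succ, bandMap_k n j (j+1) (by omega)]
      · rw [hmap_other n j x e1 e2, bandMap_out n j (j+1) x e1 e2 (by omega)]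
  | succ k hk ih =>
    intro hkn x
    have hk1 : 1 ≤ k := by omega
    have hkn' : k + 1 ≤ n := hkn
    have hbs := band_succ n j k (by omega)
    have hinv : (band n j (k+1))⁻¹ = braidGen n k * (band n j k)⁻¹ * (braidGen n k)⁻¹ := by
      rw [hbs]; group
    have haux1 : hurwitzHom n ((braidGen n k)⁻¹) = (hAut n k hk1 hkn' : MulAut (UCox n)) := by
      rw [map_inv, hurwitzHom_gen, bmap_in n k hk1 hkn', inv_inv]
    have haux2 : hurwitzHom n (braidGen n k) = (hAut n k hk1 hkn')⁻¹ := by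
      rw [hurwitzHom_gen, bmap_in n k hk1 hkn']
    have IH : ∀ y, hurwitzHom n (band n j k)⁻¹ (cS n y) = bandMap n j k y :=
      ih (by omega)
    rw [hinv, map_mul, map_mul, haux1, haux2, MulAut.mul_apply, MulAut.mul_apply,
      hAut_inv_apply, hAut_apply, hEnd_cS]
    by_cases e1 : x = k
    · subst e1
      have hin : hurwitzHom n (band n j x)⁻¹ (cS n x * cS n (x+1) * cS n x)
          = cS n j * cS n (x+1) * cS n j := by
        rw [map_mul, map_mul, IH, IH, bandMap_k n j x (by omega),
          bandMap_out n j x (x+1) (by omega) (by omega) (by omega)]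
      rw [hmap_self, hin, map_mul, map_mul]
      simp only [hEndInv_cS]
      rw [hmapInv_other n x j (by omega) (by omega), hmapInv_succ,
        bandMap_mid n j (x+1) x (by omega) (by omega)]
      simp only [mul_assoc]
    · by_cases e2 : x = k + 1
      · subst e2
        rw [hmap_succ, IH, bandMap_k n j k (by omega), hEndInv_cS,
          hmapInv_other n k j (by omega) (by omega),
          bandMap_k n j (k+1) (by omega)]
      · rw [hmap_other n k x e1 e2, IH]
        by_cases e3 : x = j
        · rw [e3]
          rw [bandMap_j, map_mul, map_mul]
          simp only [hEndInv_cS]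
          rw [hmapInv_other n k j (by omega) (by omega), hmapInv_self, bandMap_j]
        · by_cases e4 : j < x ∧ x < k
          · rw [bandMap_mid n j k x e4.1 e4.2]
            rw [map_mul, map_mul, map_mul, map_mul]
            simp only [hEndInv_cS]
            rw [hmapInv_other n k j (by omega) (by omega), hmapInv_self,
              hmapInv_other n k x (by omega) (by omega),
              bandMap_mid n j (k+1) x (by omega) (by omega)]
          · rw [bandMap_out n j k x e3 (by omega) e4, hEndInv_cS,
              hmapInv_other n k x e1 e2,
              bandMap_out n j (k+1) x e3 (by omega) (by omega)]

/-! The automorphism `β` given by the right action of `a_{jk}`, and its powers. -/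

noncomputable def bAut (n j k : ℕ) : MulAut (UCox n) := hurwitzHom n (band n j k)⁻¹

section BetaPow

variable {n j k : ℕ} (hj1 : 1 ≤ j) (hjk : j < k) (hkn : k ≤ n)

/-- `ε` flag: `1` if `i` lies strictly between `j` and `k`, else `0`. -/
def epsL (j k i : ℕ) : ℤ := if j < i ∧ i < k then 1 else 0

include hj1 hjk hkn

lemma bAut_j : bAut n j k (cS n j) = dd n j k * cS n j := by
  rw [bAut, hurwitz_band n j hj1 k hjk hkn, bandMap, if_pos rfl, dd]

lemma bAut_k : bAut n j k (cS n k) = cS n j := by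
  rw [bAut, hurwitz_band n j hj1 k hjk hkn, bandMap, if_neg (by omega), if_pos rfl]

lemma bAut_mid (x : ℕ) (h1 : j < x) (h2 : x < k) :
    bAut n j k (cS n x) = dd n j k * cS n x * (dd n j k)⁻¹ := by
  rw [bAut, hurwitz_band n j hj1 k hjk hkn, bandMap, if_neg (by omega), if_neg (by omega),
    if_pos ⟨h1, h2⟩, dd_inv hj1 (by omega) (by omega) hkn, dd]

lemma bAut_out (x : ℕ) (h1 : x ≠ j) (h2 : x ≠ k) (h3 : ¬(j < x ∧ x < k)) :
    bAut n j k (cS n x) = cS n x := by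
  rw [bAut, hurwitz_band n j hj1 k hjk hkn, bandMap, if_neg h1, if_neg h2, if_neg h3]

lemma bAut_dd : bAut n j k (dd n j k) = dd n j k := by
  rw [dd, map_mul, bAut_j hj1 hjk hkn, bAut_k hj1 hjk hkn, dd, mul_assoc, mul_assoc,
    cS_sq n j hj1 (by omega), mul_one]

lemma bAut_inv_j : (bAut n j k)⁻¹ (cS n j) = cS n k := by
  rw [MulAut.inv_def, MulEquiv.symm_apply_eq]
  exact (bAut_k hj1 hjk hkn).symm

lemma bAut_inv_k : (bAut n j k)⁻¹ (cS n k) = cS n k * cS n j * cS n k := by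
  have h : bAut n j k (cS n k * cS n j * cS n k) = cS n k := by
    rw [map_mul, map_mul, bAut_k hj1 hjk hkn, bAut_j hj1 hjk hkn, dd]
    rw [show cS n j * (cS n j * cS n k * cS n j) * cS n j
        = (cS n j * cS n j) * cS n k * (cS n j * cS n j) from by group]
    rw [cS_sq n j hj1 (by omega), one_mul, mul_one]
  rw [MulAut.inv_def, MulEquiv.symm_apply_eq]
  exact h.symm

lemma bAut_inv_mid (x : ℕ) (h1 : j < x) (h2 : x < k) :
    (bAut n j k)⁻¹ (cS n x) = (dd n j k)⁻¹ * cS n x * dd n j k := by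
  have h : bAut n j k ((dd n j k)⁻¹ * cS n x * dd n j k) = cS n x := by
    rw [map_mul, map_mul, map_inv, bAut_dd hj1 hjk hkn, bAut_mid hj1 hjk hkn x h1 h2]
    group
  rw [MulAut.inv_def, MulEquiv.symm_apply_eq]
  exact h.symm

lemma bAut_inv_out (x : ℕ) (h1 : x ≠ j) (h2 : x ≠ k) (h3 : ¬(j < x ∧ x < k)) :
    (bAut n j k)⁻¹ (cS n x) = cS n x := by
  rw [MulAut.inv_def, MulEquiv.symm_apply_eq]
  exact (bAut_out hj1 hjk hkn x h1 h2 h3).symm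

lemma bAut_pow (m : ℤ) :
    ((bAut n j k ^ m) (cS n j) = (dd n j k) ^ m * cS n j) ∧
    ((bAut n j k ^ m) (cS n k) = (dd n j k) ^ (m - 1) * cS n j) ∧
    (∀ x, x ≠ j → x ≠ k →
      (bAut n j k ^ m) (cS n x) =
        (dd n j k) ^ (m * epsL j k x) * cS n x * (dd n j k) ^ (-(m * epsL j k x))) := by
  have hjn : j ≤ n := by omega
  have hk1 : 1 ≤ k := by omega
  have hne : j ≠ k := by omega
  induction m using Int.induction_on with
  | zero =>
    refine ⟨by simp, ?_, by intro x _ _; simp⟩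
    simp only [zpow_zero, MulAut.one_apply]
    rw [show (0 : ℤ) - 1 = -1 from by ring, ddk hj1 hjn hk1 hkn]
  | succ m ih =>
    obtain ⟨ihj, ihk, ihx⟩ := ih
    have hdd : (bAut n j k ^ (m : ℤ)) (dd n j k) = dd n j k := by
      rw [dd, map_mul, ihj, ihk, mul_assoc, ← mul_assoc (cS n j), swap_jdd hj1 hjn hk1 hkn,
        ← mul_assoc, ← mul_assoc, ← zpow_add, mul_assoc, cS_sq n j hj1 hjn, mul_one]
      rw [show (m : ℤ) + -((m:ℤ) - 1) = 1 from by ring, zpow_one]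
      rfl
    have hddz : ∀ t : ℤ, (bAut n j k ^ (m : ℤ)) ((dd n j k) ^ t) = (dd n j k) ^ t := by
      intro t
      rw [map_zpow, hdd]
    have hstep : ∀ y : UCox n, (bAut n j k ^ ((m : ℤ) + 1)) y = (bAut n j k ^ (m : ℤ)) (bAut n j k y) := by
      intro y
      rw [zpow_add_one, MulAut.mul_apply]
    refine ⟨?_, ?_, ?_⟩
    · rw [hstep, bAut_j hj1 hjk hkn, map_mul, hdd, ihj, ← mul_assoc]
      rw [show (dd n j k : UCox n) * (dd n j k) ^ (m:ℤ) = (dd n j k) ^ ((m:ℤ)+1) from by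
        rw [← zpow_one_add]; congr 1; ring]
    · rw [hstep, bAut_k hj1 hjk hkn, ihj]
      congr 1
      ring_nf
    · intro x hx1 hx2
      rw [hstep]
      by_cases hmid : j < x ∧ x < k
      · rw [bAut_mid hj1 hjk hkn x hmid.1 hmid.2, map_mul, map_mul, map_inv, hdd,
          ihx x hx1 hx2]
        simp only [epsL, if_pos hmid, mul_one]
        group
      · rw [bAut_out hj1 hjk hkn x hx1 hx2 hmid, ihx x hx1 hx2]
        simp only [epsL, if_neg hmid, mul_zero, zpow_zero, one_mul, mul_one, neg_zero]
  | pred m ih =>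
    obtain ⟨ihj, ihk, ihx⟩ := ih
    have hdd : (bAut n j k ^ (-(m : ℤ))) (dd n j k) = dd n j k := by
      rw [dd, map_mul, ihj, ihk, mul_assoc, ← mul_assoc (cS n j), swap_jdd hj1 hjn hk1 hkn,
        ← mul_assoc, ← mul_assoc, ← zpow_add, mul_assoc, cS_sq n j hj1 hjn, mul_one]
      rw [show -(m : ℤ) + -(-(m:ℤ) - 1) = 1 from by ring, zpow_one]
      rfl
    have hstep : ∀ y : UCox n, (bAut n j k ^ (-(m : ℤ) - 1)) y = (bAut n j k ^ (-(m : ℤ))) ((bAut n j k)⁻¹ y) := by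
      intro y
      rw [zpow_sub_one, MulAut.mul_apply]
    refine ⟨?_, ?_, ?_⟩
    · rw [hstep, bAut_inv_j hj1 hjk hkn, ihk]
    · rw [hstep, bAut_inv_k hj1 hjk hkn, map_mul, map_mul, ihj, ihk,
        ref_mul_ref hj1 hjn hk1 hkn, ← mul_assoc, ← zpow_add]
      congr 2
      ring
    · intro x hx1 hx2
      rw [hstep]
      by_cases hmid : j < x ∧ x < k
      · rw [bAut_inv_mid hj1 hjk hkn x hmid.1 hmid.2, map_mul, map_mul, map_inv, hdd,
          ihx x hx1 hx2]
        simp only [epsL, if_pos hmid, mul_one]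
        group
      · rw [bAut_inv_out hj1 hjk hkn x hx1 hx2 hmid, ihx x hx1 hx2]
        simp only [epsL, if_neg hmid, mul_zero, zpow_zero, one_mul, mul_one, neg_zero]

lemma bAut_pow_dd (m : ℤ) : (bAut n j k ^ m) (dd n j k) = dd n j k := by
  obtain ⟨hj, hk, -⟩ := bAut_pow hj1 hjk hkn m
  have hjn : j ≤ n := by omega
  have hk1 : 1 ≤ k := by omega
  rw [dd, map_mul, hj, hk, mul_assoc, ← mul_assoc (cS n j), swap_jdd hj1 hjn hk1 hkn,
    ← mul_assoc, ← mul_assoc, ← zpow_add, mul_assoc, cS_sq n j hj1 hjn, mul_one]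
  rw [show (m : ℤ) + -((m:ℤ) - 1) = 1 from by ring, zpow_one]
  rfl

lemma ract_band_pow (m : ℤ) (y : UCox n) :
    ract n y (band n j k ^ m) = (bAut n j k ^ m) y := by
  rw [ract, ← inv_zpow, map_zpow]
  rfl

end BetaPow


/-! ### Part D: transformation of factorisations -/

/-- The transformed factor: flags `e` (own separator between?) and `d` (next separator). -/
def tw (j k : ℕ) (m e d : ℤ) (u : List ℕ) : List ℕ :=
  if Even u.length then mkE j k (parJ j u + m * (d - e))
  else mkO j k (parJ j u + m * (1 - e - d))

def dnext (j k : ℕ) : List (ℕ × List ℕ) → ℤ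
  | [] => 0
  | (i, _) :: _ => epsL j k i

def transT (j k : ℕ) (m : ℤ) : List (ℕ × List ℕ) → List (ℕ × List ℕ)
  | [] => []
  | (i, u) :: rest => (i, tw j k m (epsL j k i) (dnext j k rest) u) :: transT j k m rest

lemma mem_tw {j k : ℕ} {m e d : ℤ} {u : List ℕ} (a : ℕ) (ha : a ∈ tw j k m e d u) :
    a = j ∨ a = k := by
  rw [tw] at ha
  split at ha
  · exact mem_mkE _ _ _ _ ha
  · exact mem_mkO _ _ _ _ ha

lemma chain_tw {j k : ℕ} (h : j ≠ k) (m e d : ℤ) (u : List ℕ) :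
    (tw j k m e d u).Chain' (· ≠ ·) := by
  rw [tw]
  split
  · exact chain_mkE _ _ h _
  · exact chain_mkO _ _ h _

lemma tw_nil {j k : ℕ} (hne : j ≠ k) {m e : ℤ} {u : List ℕ}
    (hmem : ∀ a ∈ u, a = j ∨ a = k) (hch : u.Chain' (· ≠ ·))
    (h : tw j k m e e u = []) : u = [] := by
  have hlen := len_parJ hne u hmem hch
  rw [tw] at h
  by_cases he : Even u.length
  · rw [if_pos he] at h
    rw [if_pos he] at hlen
    have h2 : (mkE j k (parJ j u + m * (e - e))).length = 0 := by rw [h]; rfl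
    rw [length_mkE] at h2
    have : parJ j u = 0 := by omega
    rw [← List.length_eq_zero_iff]
    omega
  · rw [if_neg he] at h
    have h2 : (mkO j k (parJ j u + m * (1 - e - e))).length = 0 := by rw [h]; rfl
    rw [length_mkO] at h2
    omega

lemma wp_tw {n j k : ℕ} (hj1 : 1 ≤ j) (hjk : j < k) (hkn : k ≤ n)
    (m e d : ℤ) (u : List ℕ) (hmem : ∀ a ∈ u, a = j ∨ a = k) (hch : u.Chain' (· ≠ ·)) :
    wordProd n (tw j k m e d u) =
      (dd n j k) ^ (-(m * e)) * (bAut n j k ^ m) (wordProd n u) * (dd n j k) ^ (m * d) := by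
  have hjn : j ≤ n := by omega
  have hk1 : 1 ≤ k := by omega
  have hne : j ≠ k := by omega
  by_cases he : Even u.length
  · rw [tw, if_pos he, wp_mkE hj1 hjn hk1 hkn,
      wp_parJ hj1 hjn hk1 hkn hne u hmem hch, if_pos he, mul_one, map_zpow,
      bAut_pow_dd hj1 hjk hkn, ← zpow_add, ← zpow_add]
    congr 1
    ring
  · have key : ∀ a b c : ℤ, (dd n j k) ^ a * ((dd n j k) ^ b * cS n j) * (dd n j k) ^ c
        = (dd n j k) ^ (a + b - c) * cS n j := by
      intro a b c
      rw [← mul_assoc, ← zpow_add, mul_assoc, swap_jdd hj1 hjn hk1 hkn, ← mul_assoc,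
        ← zpow_add, sub_eq_add_neg]
    rw [tw, if_neg he, wp_mkO hj1 hjn hk1 hkn,
      wp_parJ hj1 hjn hk1 hkn hne u hmem hch, if_neg he, map_mul, map_zpow,
      bAut_pow_dd hj1 hjk hkn, (bAut_pow hj1 hjk hkn m).1,
      ← mul_assoc (dd n j k ^ parJ j u), ← zpow_add, key]
    congr 2
    ring

lemma wp_glue_trans {n j k : ℕ} (hj1 : 1 ≤ j) (hjk : j < k) (hkn : k ≤ n) (m : ℤ) :
    ∀ (tail : List (ℕ × List ℕ)) (u0 : List ℕ) (e : ℤ),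
    (∀ p ∈ tail, (p.1 ≠ j ∧ p.1 ≠ k) ∧ ∀ a ∈ p.2, a = j ∨ a = k) →
    (∀ p ∈ tail, p.2.Chain' (· ≠ ·)) →
    (∀ a ∈ u0, a = j ∨ a = k) → u0.Chain' (· ≠ ·) →
    wordProd n (glue (tw j k m e (dnext j k tail) u0) (transT j k m tail)) =
      (dd n j k) ^ (-(m * e)) * (bAut n j k ^ m) (wordProd n (glue u0 tail)) := by
  intro tail
  induction tail with
  | nil =>
    intro u0 e _ _ hm hc
    show wordProd n (tw j k m e 0 u0) = _
    rw [wp_tw hj1 hjk hkn m e 0 u0 hm hc, mul_zero, zpow_zero, mul_one]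
    rfl
  | cons p rest ih =>
    obtain ⟨i, u⟩ := p
    intro u0 e htail hchains hm hc
    have hsep := (htail (i, u) (List.mem_cons_self)).1
    have humem := (htail (i, u) (List.mem_cons_self)).2
    have huch := hchains (i, u) (List.mem_cons_self)
    show wordProd n (tw j k m e (epsL j k i) u0 ++
      i :: glue (tw j k m (epsL j k i) (dnext j k rest) u) (transT j k m rest)) = _
    rw [wordProd_append, wordProd_cons,
      ih u (epsL j k i) (fun p hp => htail p (List.mem_cons_of_mem _ hp))
        (fun p hp => hchains p (List.mem_cons_of_mem _ hp)) humem huch,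
      wp_tw hj1 hjk hkn m e (epsL j k i) u0 hm hc]
    rw [show glue u0 ((i, u) :: rest) = u0 ++ i :: glue u rest from rfl,
      wordProd_append, wordProd_cons, map_mul, map_mul,
      (bAut_pow hj1 hjk hkn m).2.2 i hsep.1 hsep.2]
    group

lemma chain_glue_factors : ∀ (tail : List (ℕ × List ℕ)) (u0 : List ℕ),
    (glue u0 tail).Chain' (· ≠ ·) →
    u0.Chain' (· ≠ ·) ∧ ∀ p ∈ tail, p.2.Chain' (· ≠ ·) := by
  intro tail
  induction tail with
  | nil => intro u0 h; exact ⟨h, by simp⟩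
  | cons p rest ih =>
    obtain ⟨i, u⟩ := p
    intro u0 h
    have h' : (u0 ++ i :: glue u rest).IsChain (· ≠ ·) := h
    rw [List.isChain_append] at h'
    have hrest := ih u h'.2.1.tail
    refine ⟨h'.1, ?_⟩
    intro q hq
    rcases List.mem_cons.1 hq with rfl | hq
    · exact hrest.1
    · exact hrest.2 q hq

lemma glue_cons_head : ∀ (t : List (ℕ × List ℕ)) (c : ℕ) (w : List ℕ),
    (glue (c :: w) t).head? = some c := by
  intro t
  cases t with
  | nil => intro c w; rfl
  | cons p r => intro c w; obtain ⟨i, u⟩ := p; rfl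

lemma chain_glue_trans {j k : ℕ} (hj1 : 1 ≤ j) (hjk : j < k) (m : ℤ) :
    ∀ (tail : List (ℕ × List ℕ)) (u0 u0' : List ℕ),
    (∀ p ∈ tail, (p.1 ≠ j ∧ p.1 ≠ k) ∧ ∀ a ∈ p.2, a = j ∨ a = k) →
    (glue u0 tail).Chain' (· ≠ ·) →
    (∀ a ∈ u0', a = j ∨ a = k) → u0'.Chain' (· ≠ ·) →
    (glue u0' (transT j k m tail)).Chain' (· ≠ ·) := by
  have hne : j ≠ k := by omega
  intro tail
  induction tail with
  | nil => intro u0 u0' _ _ _ hc'; exact hc'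
  | cons p rest ih =>
    obtain ⟨i, u⟩ := p
    intro u0 u0' htail horig hm' hc'
    have hsep := (htail (i, u) (List.mem_cons_self)).1
    have humem := (htail (i, u) (List.mem_cons_self)).2
    have horig' : (u0 ++ i :: glue u rest).IsChain (· ≠ ·) := horig
    rw [List.isChain_append] at horig'
    have huch : u.Chain' (· ≠ ·) := (chain_glue_factors rest u horig'.2.1.tail).1
    show (u0' ++ i :: glue (tw j k m (epsL j k i) (dnext j k rest) u)
      (transT j k m rest)).IsChain (· ≠ ·)
    rw [List.isChain_append]
    refine ⟨hc', ?_, ?_⟩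
    · rw [List.isChain_cons]
      constructor
      · intro y hy
        -- y is the head of glue (tw …) (transT rest)
        cases htw : tw j k m (epsL j k i) (dnext j k rest) u with
        | cons c w =>
          rw [htw, glue_cons_head] at hy
          simp only [Option.mem_def, Option.some.injEq] at hy
          subst hy
          rcases mem_tw c (htw ▸ List.mem_cons_self) with rfl | rfl
          · exact hsep.1
          · exact hsep.2
        | nil =>
          rw [htw] at hy
          cases rest with
          | nil =>
            rw [show glue ([] : List ℕ) (transT j k m []) = [] from rfl] at hy
            simp at hy
          | cons q r2 =>
            obtain ⟨i2, u2⟩ := q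
            have hy2 : y = i2 := by
              have hgl : (glue ([] : List ℕ) (transT j k m ((i2, u2) :: r2))).head?
                  = some i2 := by rfl
              rw [hgl] at hy
              simp only [Option.mem_def, Option.some.injEq] at hy
              exact hy.symm
            rw [hy2]
            by_cases hee : epsL j k i = epsL j k i2
            · -- then u is empty, so i and i2 were adjacent in the original word
              have hun : u = [] := by
                apply tw_nil hne humem huch
                rw [show dnext j k ((i2, u2) :: r2) = epsL j k i2 from rfl, ← hee] at htw
                exact htw
              have : (i :: glue u ((i2, u2) :: r2)).Chain' (· ≠ ·) := horig'.2.1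
              rw [hun] at this
              have : (i :: i2 :: glue u2 r2).Chain' (· ≠ ·) := this
              exact (List.isChain_cons_cons.1 this).1
            · -- the flags differ, so i ≠ i2
              intro hii
              exact hee (by rw [hii])
      · exact ih u (tw j k m (epsL j k i) (dnext j k rest) u)
          (fun p hp => htail p (List.mem_cons_of_mem _ hp)) horig'.2.1.tail
          (fun a ha => mem_tw a ha) (chain_tw hne m _ _ u)
    · intro x hx y hy
      simp only [List.head?_cons, Option.mem_def, Option.some.injEq] at hy
      subst hy
      rcases hm' x (List.mem_of_mem_getLast? hx) with rfl | rfl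
      · exact Ne.symm hsep.1
      · exact Ne.symm hsep.2

lemma mem_glue_trans {j k : ℕ} (m : ℤ) : ∀ (tail : List (ℕ × List ℕ)) (u0' : List ℕ) (a : ℕ),
    a ∈ glue u0' (transT j k m tail) →
    a ∈ u0' ∨ (a = j ∨ a = k) ∨ a ∈ tail.map Prod.fst := by
  intro tail
  induction tail with
  | nil => intro u0' a ha; exact Or.inl ha
  | cons p rest ih =>
    obtain ⟨i, u⟩ := p
    intro u0' a ha
    have ha' : a ∈ u0' ++ i :: glue (tw j k m (epsL j k i) (dnext j k rest) u)
        (transT j k m rest) := ha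
    rcases List.mem_append.1 ha' with h | h
    · exact Or.inl h
    · rcases List.mem_cons.1 h with rfl | h
      · right; right; simp
      · rcases ih _ a h with h | h | h
        · exact Or.inr (Or.inl (mem_tw a h))
        · exact Or.inr (Or.inl h)
        · right; right; simp only [List.map_cons, List.mem_cons]; exact Or.inr h

lemma sep_mem_glue : ∀ (tail : List (ℕ × List ℕ)) (u0 : List ℕ) (a : ℕ),
    a ∈ tail.map Prod.fst → a ∈ glue u0 tail := by
  intro tail
  induction tail with
  | nil => intro u0 a ha; simp at ha
  | cons p rest ih =>
    obtain ⟨i, u⟩ := p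
    intro u0 a ha
    show a ∈ u0 ++ i :: glue u rest
    rcases List.mem_cons.1 (by simpa using ha : a ∈ i :: rest.map Prod.fst) with rfl | h
    · simp
    · exact List.mem_append.2 (Or.inr (List.mem_cons.2 (Or.inr (ih u a (by simpa using h)))))

lemma transT_map_fst (j k : ℕ) (m : ℤ) : ∀ tail : List (ℕ × List ℕ),
    (transT j k m tail).map Prod.fst = tail.map Prod.fst := by
  intro tail
  induction tail with
  | nil => rfl
  | cons p rest ih =>
    obtain ⟨i, u⟩ := p
    show i :: (transT j k m rest).map Prod.fst = i :: rest.map Prod.fst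
    rw [ih]

lemma transT_fact {j k : ℕ} (m : ℤ) (tail : List (ℕ × List ℕ))
    (h : ∀ p ∈ tail, (p.1 ≠ j ∧ p.1 ≠ k) ∧ ∀ a ∈ p.2, a = j ∨ a = k) :
    ∀ p ∈ transT j k m tail, (p.1 ≠ j ∧ p.1 ≠ k) ∧ ∀ a ∈ p.2, a = j ∨ a = k := by
  induction tail with
  | nil => simp [transT]
  | cons q rest ih =>
    obtain ⟨i, u⟩ := q
    intro p hp
    rcases List.mem_cons.1 hp with rfl | hp
    · exact ⟨(h (i, u) (List.mem_cons_self)).1, fun a ha => mem_tw a ha⟩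
    · exact ih (fun q hq => h q (List.mem_cons_of_mem _ hq)) p hp

lemma transT_getD (j k : ℕ) (m : ℤ) : ∀ (tail : List (ℕ × List ℕ)) (t : ℕ),
    t < tail.length →
    (transT j k m tail).getD t (0, []) =
      ((tail.getD t (0, [])).1,
        tw j k m (epsL j k (tail.getD t (0, [])).1) (dnext j k (tail.drop (t + 1)))
          (tail.getD t (0, [])).2) := by
  intro tail
  induction tail with
  | nil => intro t ht; simp at ht
  | cons p rest ih =>
    obtain ⟨i, u⟩ := p
    intro t ht
    cases t with
    | zero => rfl
    | succ t =>
      show (transT j k m rest).getD t (0, []) = _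
      exact ih t (by simpa using ht)

lemma dnext_drop (j k : ℕ) : ∀ (tail : List (ℕ × List ℕ)) (t : ℕ),
    t + 1 < tail.length →
    dnext j k (tail.drop (t + 1)) = epsL j k (tail.getD (t + 1) (0, [])).1 := by
  intro tail
  induction tail with
  | nil => intro t ht; simp at ht
  | cons p rest ih =>
    obtain ⟨i, u⟩ := p
    intro t ht
    cases t with
    | zero =>
      cases rest with
      | nil => simp at ht
      | cons q r2 => rfl
    | succ t =>
      show dnext j k (rest.drop (t + 1)) = epsL j k (rest.getD (t + 1) (0, [])).1
      exact ih t (by simpa using ht)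

lemma epsL_cases (j k i : ℕ) : epsL j k i = 0 ∨ epsL j k i = 1 := by
  rw [epsL]; split
  · exact Or.inr rfl
  · exact Or.inl rfl

theorem stmt2 (n j k : ℕ) (m : ℤ) (hj : 1 ≤ j) (hjk : j < k) (hk : k ≤ n) (hm : m ≠ 0)
    (w w0 : List ℕ) (tail : List (ℕ × List ℕ))
    (hred : IsRedWord n w) (hfact : IsJKFact j k w w0 tail)
    (hlen0 : w0.length ≠ 2 * m.natAbs)
    (hlen : ∀ p ∈ tail, p.2.length ≠ 2 * m.natAbs)
    (w' : List ℕ) (hred' : IsRedWord n w')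
    (hw' : wordProd n w' = ract n (wordProd n w) (band n j k ^ m)) :
    ∃ (w0' : List ℕ) (tail' : List (ℕ × List ℕ)),
      IsJKFact j k w' w0' tail' ∧
      tail'.map Prod.fst = tail.map Prod.fst ∧
      ∀ t : ℕ, t + 1 < tail.length →
        CriticalFactor j k (tail.getD t (0, [])).1 (tail.getD t (0, [])).2
            (tail.getD (t+1) (0, [])).1 →
          CriticalFactor j k (tail'.getD t (0, [])).1 (tail'.getD t (0, [])).2
              (tail'.getD (t+1) (0, [])).1 ∧
          2 * m.natAbs ≤ (tail.getD t (0, [])).2.length +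
            (tail'.getD t (0, [])).2.length := by
  obtain ⟨hglue, hm0, htail⟩ := hfact
  have hk1 : 1 ≤ k := by omega
  have hne : j ≠ k := by omega
  obtain ⟨hrange, hchainW⟩ := hred
  have hchainG : (glue w0 tail).Chain' (· ≠ ·) := by rw [← hglue]; exact hchainW
  have hchains := chain_glue_factors tail w0 hchainG
  refine ⟨tw j k m 0 (dnext j k tail) w0, transT j k m tail, ⟨?_, ?_, ?_⟩,
    transT_map_fst j k m tail, ?_⟩
  · -- `w'` equals the constructed word
    have hwp : wordProd n (glue (tw j k m 0 (dnext j k tail) w0) (transT j k m tail))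
        = (bAut n j k ^ m) (wordProd n w) := by
      rw [wp_glue_trans hj hjk hk m tail w0 0 htail hchains.2 hm0 hchains.1, ← hglue]
      simp
    have hconstr : IsRedWord n (glue (tw j k m 0 (dnext j k tail) w0) (transT j k m tail)) := by
      constructor
      · intro x hx
        rcases mem_glue_trans m tail _ x hx with h | h | h
        · rcases mem_tw x h with rfl | rfl
          · exact ⟨hj, by omega⟩
          · exact ⟨hk1, hk⟩
        · rcases h with rfl | rfl
          · exact ⟨hj, by omega⟩
          · exact ⟨hk1, hk⟩
        · exact hrange x (by rw [hglue]; exact sep_mem_glue tail w0 x h)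
      · exact chain_glue_trans hj hjk m tail w0 _ htail hchainG
          (fun x hx => mem_tw x hx) (chain_tw hne m _ _ w0)
    have h2 : wordProd n w' =
        wordProd n (glue (tw j k m 0 (dnext j k tail) w0) (transT j k m tail)) := by
      rw [hw', ract_band_pow hj hjk hk m (wordProd n w), hwp]
    exact redword_unique hred' hconstr h2
  · exact fun x hx => mem_tw x hx
  · exact transT_fact m tail htail
  · -- criticality and length bound
    intro t ht hcrit
    have htt : t < tail.length := by omega
    have hPmem : tail.getD t (0, []) ∈ tail := by
      rw [List.getD_eq_getElem tail (0, []) htt]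
      exact List.getElem_mem htt
    have hQmem : tail.getD (t + 1) (0, []) ∈ tail := by
      rw [List.getD_eq_getElem tail (0, []) ht]
      exact List.getElem_mem ht
    obtain ⟨hsepP, humem⟩ := htail _ hPmem
    have huch := hchains.2 _ hPmem
    set u := (tail.getD t (0, [])).2 with hu
    set a := (tail.getD t (0, [])).1 with ha
    set b := (tail.getD (t + 1) (0, [])).1 with hb
    have hget := transT_getD j k m tail t htt
    have hget' := transT_getD j k m tail (t + 1) ht
    have hd := dnext_drop j k tail t ht
    have h1 : ((transT j k m tail).getD t (0, [])).1 = a := by rw [hget]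
    have h2 : ((transT j k m tail).getD t (0, [])).2
        = tw j k m (epsL j k a) (epsL j k b) u := by rw [hget, hd]
    have hfst : ((transT j k m tail).getD (t + 1) (0, [])).1 = b := by rw [hget']
    rw [h1, h2, hfst]
    have hlenu := len_parJ hne u humem huch
    set p := parJ j u with hp
    rcases hcrit with ⟨hodd, hab⟩ | ⟨heven, hcross⟩
    · have he : ¬ Even u.length := Nat.not_even_iff_odd.2 hodd
      have heab : epsL j k a = epsL j k b := by rw [hab]
      rw [if_neg he] at hlenu
      constructor
      · left
        refine ⟨?_, hab⟩
        rw [tw, if_neg he, length_mkO]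
        exact Int.natAbs_odd.2 ⟨p + m * (1 - epsL j k a - epsL j k b), by ring⟩
      · rw [tw, if_neg he, length_mkO, hlenu, heab]
        rcases epsL_cases j k b with h0 | h0
        · rw [h0, show p + m * (1 - 0 - 0) = p + m from by ring]
          omega
        · rw [h0, show p + m * (1 - 1 - 1) = p - m from by ring]
          omega
    · obtain ⟨haj, hak, hbj, hbk, hne2, hiff⟩ := hcross
      rw [if_pos heven] at hlenu
      constructor
      · right
        refine ⟨?_, haj, hak, hbj, hbk, hne2, hiff⟩
        rw [tw, if_pos heven, length_mkE]
        exact ⟨(p + m * (epsL j k b - epsL j k a)).natAbs, by ring⟩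
      · rw [tw, if_pos heven, length_mkE, hlenu]
        by_cases hma : j < a ∧ a < k
        · have hmb : ¬(j < b ∧ b < k) := hiff.1 hma
          rw [show epsL j k a = 1 from if_pos hma, show epsL j k b = 0 from if_neg hmb,
            show p + m * (0 - 1) = p - m from by ring]
          omega
        · have hmb : j < b ∧ b < k := by
            by_contra hc
            exact hma (hiff.2 hc)
          rw [show epsL j k a = 0 from if_neg hma, show epsL j k b = 1 from if_pos hmb,
            show p + m * (1 - 0) = p + m from by ring]
          omega
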